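/- arXiv:2302.12865 — 3 statements merged into one kernel-verified Lean document; each statement's English description precedes it below -/
import Mathlib

section
/- For any metric space X and any metrically convex function f, 2·d_GH(X, f(X)) ≤ sup_{x ∈ A} |x − f(x)|, where f(X) denotes X equipped with metric f ∘ d_X, and A = [s(X), diam X] if diam X < ∞ and A = [s(X), ∞) otherwise, where s(X) = inf{ d(x,x′) : x ≠ x′ }. -/
open scoped NNReal ENNReal

universe u v

def MetricallyConvex (f : ℝ≥0 → ℝ≥0) : Prop :=
  f 0 = 0 ∧ (¬ ∀ x y : ℝ≥0, f x = f y) ∧ ∀ a b c : ℝ≥0, a ≤ b + c → f a ≤ f b + f c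

noncomputable def ghDist (A : Type u) (B : Type v) [MetricSpace A] [MetricSpace B] : ℝ≥0∞ :=
  sInf {r : ℝ≥0∞ | ∃ (Z : Type (max u v)) (_ : MetricSpace Z) (fA : A → Z) (fB : B → Z),
    Isometry fA ∧ Isometry fB ∧
    EMetric.hausdorffEdist (Set.range fA) (Set.range fB) ≤ r}

/-- The infimum of distances between distinct points of `X`, as a value in `ℝ≥0∞`. -/
noncomputable def sepInf (X : Type u) [MetricSpace X] : ℝ≥0∞ :=
  sInf {r : ℝ≥0∞ | ∃ x x' : X, x ≠ x' ∧ r = edist x x'}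

/-- For a metric space `X` and a metrically convex `f`, if `Y` realizes `f(X)` (i.e. `Y` is `X`
with the metric `f ∘ d_X`), then `2 d_GH(X, f(X)) ≤ sup_{x ∈ A} |x - f x|` where
`A = [s(X), diam X]` if the diameter is finite and `A = [s(X), ∞)` otherwise. -/
theorem two_ghDist_to_image_le {X : Type u} {Y : Type v} [MetricSpace X] [MetricSpace Y]
    (f : ℝ≥0 → ℝ≥0) (hf : MetricallyConvex f) (e : X ≃ Y)
    (he : ∀ x x' : X, nndist (e x) (e x') = f (nndist x x')) :
    2 * ghDist X Y ≤
      ⨆ x ∈ {d : ℝ≥0 | sepInf X ≤ (d : ℝ≥0∞) ∧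
        (d : ℝ≥0∞) ≤ EMetric.diam (Set.univ : Set X)}, edist x (f x) := by
  set S : ℝ≥0∞ := ⨆ x ∈ {d : ℝ≥0 | sepInf X ≤ (d : ℝ≥0∞) ∧
      (d : ℝ≥0∞) ≤ EMetric.diam (Set.univ : Set X)}, edist x (f x) with hS
  -- Step 1: pointwise distortion bound
  have step1 : ∀ x x' : X, edist (nndist x x') (f (nndist x x')) ≤ S := by
    intro x x'
    rcases eq_or_ne x x' with rfl | hne
    · simp [hf.1]
    · have hmem : nndist x x' ∈ {d : ℝ≥0 | sepInf X ≤ (d : ℝ≥0∞) ∧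
          (d : ℝ≥0∞) ≤ EMetric.diam (Set.univ : Set X)} := by
        constructor
        · rw [← edist_nndist]
          exact sInf_le ⟨x, x', hne, rfl⟩
        · rw [← edist_nndist]
          exact EMetric.edist_le_diam_of_mem (Set.mem_univ _) (Set.mem_univ _)
      exact le_iSup₂_of_le (nndist x x') hmem le_rfl
  -- Step 2: for any ε with S < 2ε, ghDist X Y ≤ ε
  have step2 : ∀ ε : ℝ≥0, S < 2 * (ε : ℝ≥0∞) → ghDist X Y ≤ ε := by
    intro ε hε
    cases isEmpty_or_nonempty X with
    | inl hX =>
      have hY : IsEmpty Y := Function.isEmpty e.symm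
      refine le_trans (sInf_le ?_) zero_le
      letI : MetricSpace (X ⊕ Y) := Metric.metricSpaceSum
      refine ⟨X ⊕ Y, inferInstance, Sum.inl, Sum.inr,
        Metric.isometry_inl, Metric.isometry_inr, ?_⟩
      have h1 : (Set.range (Sum.inl : X → X ⊕ Y)) = ∅ := Set.range_eq_empty _
      have h2 : (Set.range (Sum.inr : Y → X ⊕ Y)) = ∅ := Set.range_eq_empty _
      rw [h1, h2]
      exact (EMetric.hausdorffEdist_self (s := (∅ : Set (X ⊕ Y)))).le
    | inr hX =>
      have ε0 : (0 : ℝ) < ε := by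
        have : ε ≠ 0 := by
          rintro rfl
          simp at hε
        exact_mod_cast this.bot_lt
      have H : ∀ p q : X, |dist (id p) (id q) - dist (e p) (e q)| ≤ 2 * (ε : ℝ) := by
        intro p q
        have h1 : edist (nndist p q) (f (nndist p q)) ≤ S := step1 p q
        have h2 : edist (nndist p q) (f (nndist p q)) < 2 * (ε : ℝ≥0∞) := lt_of_le_of_lt h1 hε
        have h3 : (2 : ℝ≥0∞) * (ε : ℝ≥0∞) = ((2 * ε : ℝ≥0) : ℝ≥0∞) := by push_cast; ring
        rw [h3, edist_lt_coe] at h2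
        have h4 : dist (nndist p q) (f (nndist p q)) < 2 * (ε : ℝ) := by
          rw [dist_nndist]
          exact_mod_cast h2
        have h5 : dist (e p) (e q) = ((f (nndist p q) : ℝ≥0) : ℝ) := by
          rw [dist_nndist, he]
        have h6 : dist (id p) (id q) = ((nndist p q : ℝ≥0) : ℝ) := dist_nndist p q
        rw [h5, h6, ← NNReal.dist_eq]
        exact h4.le
      letI M : MetricSpace (X ⊕ Y) := Metric.glueMetricApprox (id : X → X) (⇑e) ε ε0 H
      refine sInf_le ⟨X ⊕ Y, M, Sum.inl, Sum.inr,
        Isometry.of_dist_eq fun _ _ => rfl, Isometry.of_dist_eq fun _ _ => rfl, ?_⟩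
      have key : ∀ x : X, edist (Sum.inl x : X ⊕ Y) (Sum.inr (e x)) = (ε : ℝ≥0∞) := by
        intro x
        have hd : dist (Sum.inl x : X ⊕ Y) (Sum.inr (e x)) = ε :=
          Metric.glueDist_glued_points (id : X → X) (⇑e) ε x
        rw [edist_dist, hd, ENNReal.ofReal_coe_nnreal]
      apply EMetric.hausdorffEdist_le_of_mem_edist
      · rintro _ ⟨x, rfl⟩
        exact ⟨Sum.inr (e x), ⟨e x, rfl⟩, (key x).le⟩
      · rintro _ ⟨y, rfl⟩
        refine ⟨Sum.inl (e.symm y), ⟨e.symm y, rfl⟩, ?_⟩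
        rw [edist_comm]
        have := key (e.symm y)
        rw [e.apply_symm_apply] at this
        exact this.le
  -- Step 3: conclude
  rcases eq_or_ne S ⊤ with hT | hT
  · rw [hT]; exact le_top
  have hD : ghDist X Y ≤ S / 2 := by
    refine ENNReal.le_of_forall_pos_le_add fun η hη _ => ?_
    set s : ℝ≥0 := S.toNNReal with hs
    have hcast : S = ((s : ℝ≥0) : ℝ≥0∞) := (ENNReal.coe_toNNReal hT).symm
    have hltn : s < 2 * (s / 2 + η) := by
      have : 2 * (s / 2 + η) = s + 2 * η := by
        rw [mul_add, mul_div_cancel₀]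
        exact two_ne_zero
      rw [this]
      exact lt_add_of_pos_right _ (by positivity)
    have hlt : S < 2 * ((s / 2 + η : ℝ≥0) : ℝ≥0∞) := by
      rw [hcast]
      have : (2:ℝ≥0∞) * ((s / 2 + η : ℝ≥0) : ℝ≥0∞) = ((2 * (s / 2 + η) : ℝ≥0) : ℝ≥0∞) := by
        push_cast; ring
      rw [this]
      exact_mod_cast hltn
    calc ghDist X Y ≤ ((s / 2 + η : ℝ≥0) : ℝ≥0∞) := step2 _ hlt
      _ = S / 2 + η := by
          rw [ENNReal.coe_add, ENNReal.coe_div two_ne_zero, ← hcast]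
          norm_num
  calc 2 * ghDist X Y ≤ 2 * (S / 2) := by
        exact mul_le_mul_right hD 2
    _ = S := ENNReal.mul_div_cancel two_ne_zero ENNReal.ofNat_ne_top
end

section
/- Let X be a metric space and c > 0, and let X + c denote X with metric d′(x,y) = d(x,y) + c for x ≠ y, d′(x,x) = 0. Then e(X + c) = e(X), where e(Y) = inf{ dis f : f a bijection Y → Y, f ≠ id } and dis f = sup_{a,a′} |d(a,a′) − d(f(a),f(a′))|. -/
open scoped NNReal ENNReal Classical

lemma dist_abs_eq {X : Type*} [MetricSpace X] (c : ℝ)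
    (d' : X → X → ℝ) (hd' : ∀ x y : X, d' x y = if x = y then 0 else dist x y + c)
    (f : X ≃ X) (a a' : X) :
    |d' a a' - d' (f a) (f a')| = |dist a a' - dist (f a) (f a')| := by
  rw [hd', hd']
  by_cases h : a = a'
  · subst h
    simp
  · have h2 : f a ≠ f a' := fun he => h (f.injective he)
    simp only [if_neg h, if_neg h2]
    ring_nf

/-- `e(X + c) = e(X)`, where `e` is the infimum of distortions of non-identity
self-bijections, the distortion being `sup |d(a,a') - d(f a, f a')|` (in `ℝ≥0∞`). -/
theorem add_const_min_distortion {X : Type*} [MetricSpace X] (c : ℝ) (hc : 0 < c)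
    (d' : X → X → ℝ) (hd' : ∀ x y : X, d' x y = if x = y then 0 else dist x y + c) :
    sInf {r : ℝ≥0∞ | ∃ f : X ≃ X, f ≠ Equiv.refl X ∧
        r = ⨆ (a : X) (a' : X), ENNReal.ofReal |d' a a' - d' (f a) (f a')|} =
      sInf {r : ℝ≥0∞ | ∃ f : X ≃ X, f ≠ Equiv.refl X ∧
        r = ⨆ (a : X) (a' : X), ENNReal.ofReal |dist a a' - dist (f a) (f a')|} := by
  congr 1
  ext r
  constructor <;> rintro ⟨f, hf, rfl⟩ <;> exact ⟨f, hf, by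
    simp only [dist_abs_eq c d' hd' f]⟩
end

section
/- For every metric space X and every η > 0, there exists a generic metric space U with d_GH(X, U) ≤ η, i.e., generic metric spaces are dense in the Gromov–Hausdorff class. Moreover, for any δ, c > 0 with δ + c ≤ η, U can be chosen with s(U) ≥ δ/3 + 2c, t(U) ≥ 2c, and e(U) ≥ δ/3. -/
open scoped NNReal ENNReal

universe u

def IsCorrespondence {A B : Type u} (R : Set (A × B)) : Prop :=
  (∀ a : A, ∃ b : B, (a, b) ∈ R) ∧ (∀ b : B, ∃ a : A, (a, b) ∈ R)

noncomputable def corrDistortion {A B : Type u} [MetricSpace A] [MetricSpace B]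
    (R : Set (A × B)) : ℝ≥0∞ :=
  ⨆ p ∈ R, ⨆ q ∈ R, ENNReal.ofReal |dist p.1 q.1 - dist p.2 q.2|

/-- Twice the Gromov–Hausdorff distance, expressed as the infimum of distortions of
correspondences. -/
noncomputable def twoGhDist (A B : Type u) [MetricSpace A] [MetricSpace B] : ℝ≥0∞ :=
  ⨅ (R : Set (A × B)) (_ : IsCorrespondence R), corrDistortion R

/-- `t(X)`: the infimum of triangle defects over pairwise distinct triples. -/
noncomputable def defectInf (X : Type u) [MetricSpace X] : ℝ≥0∞ :=
  sInf {r : ℝ≥0∞ | ∃ x y z : X, x ≠ y ∧ y ≠ z ∧ x ≠ z ∧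
    r = ENNReal.ofReal (dist x y + dist y z - dist x z)}

/-- `e(X)`: the infimum of distortions of non-identity self-bijections. -/
noncomputable def bijDistortionInf (X : Type u) [MetricSpace X] : ℝ≥0∞ :=
  sInf {r : ℝ≥0∞ | ∃ f : X ≃ X, f ≠ Equiv.refl X ∧
    r = ⨆ (a : X) (a' : X), ENNReal.ofReal |dist a a' - dist (f a) (f a')|}

set_option linter.unusedSectionVars false
set_option linter.unusedVariables false
set_option linter.dupNamespace false

namespace GenericDense


def adjL : List (ℕ × ℕ) := [(0,1),(0,2),(0,3),(1,2),(1,4),(3,5)]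

def A (i j : Fin 6) : Bool := adjL.contains (i.1, j.1) || adjL.contains (j.1, i.1)

lemma A_symm : ∀ i j : Fin 6, A i j = A j i := by decide

lemma A_irrefl : ∀ i : Fin 6, A i i = false := by decide

set_option maxRecDepth 100000 in
lemma A_rigid_perm : ∀ τ : Equiv.Perm (Fin 6), (∀ i j, A (τ i) (τ j) = A i j) → ∀ i, τ i = i := by
  decide

lemma A_rigid (τ : Fin 6 → Fin 6) (hinj : Function.Injective τ)
    (hA : ∀ i j, A (τ i) (τ j) = A i j) : ∀ i, τ i = i := by
  have hbij : Function.Bijective τ := Finite.injective_iff_bijective.1 hinj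
  exact A_rigid_perm (Equiv.ofBijective τ hbij) hA



variable {X : Type u} [MetricSpace X]

def Pt (X : Type u) : Type u := X × ULift.{u} (Fin 6)

def Mark (x y : X) (i j : Fin 6) : Prop :=
  (x = y ∧ A i j = true) ∨
  (x ≠ y ∧ ((WellOrderingRel x y ∧ i = 0 ∧ j = 1) ∨ (WellOrderingRel y x ∧ i = 1 ∧ j = 0)))

lemma mark_symm (x y : X) (i j : Fin 6) : Mark x y i j ↔ Mark y x j i := by
  unfold Mark
  rw [A_symm i j]
  constructor
  · rintro (⟨rfl, h⟩ | ⟨hne, (⟨hr, h0, h1⟩ | ⟨hr, h0, h1⟩)⟩)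
    · exact Or.inl ⟨rfl, h⟩
    · exact Or.inr ⟨hne.symm, Or.inr ⟨hr, h1, h0⟩⟩
    · exact Or.inr ⟨hne.symm, Or.inl ⟨hr, h1, h0⟩⟩
  · rintro (⟨rfl, h⟩ | ⟨hne, (⟨hr, h0, h1⟩ | ⟨hr, h0, h1⟩)⟩)
    · exact Or.inl ⟨rfl, h⟩
    · exact Or.inr ⟨hne.symm, Or.inr ⟨hr, h1, h0⟩⟩
    · exact Or.inr ⟨hne.symm, Or.inl ⟨hr, h1, h0⟩⟩

open Classical in
noncomputable def mk (m : ℝ) (x y : X) (i j : Fin 6) : ℝ := if Mark x y i j then m else 0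

open Classical in
noncomputable def gd (m c : ℝ) (u v : Pt X) : ℝ :=
  if h : u = v then 0
  else 2*m*((⌈dist u.1 v.1 / (2*m)⌉ : ℤ) : ℝ) + (2*c + m) +
    mk m u.1 v.1 u.2.down v.2.down

section
variable {m c : ℝ}

lemma mk_symm (x y : X) (i j : Fin 6) : mk m x y i j = mk m y x j i := by
  unfold mk
  by_cases hM : Mark x y i j
  · rw [if_pos hM, if_pos ((mark_symm _ _ _ _).1 hM)]
  · rw [if_neg hM, if_neg (fun h' => hM ((mark_symm _ _ _ _).2 h'))]

lemma mk_nonneg (hm : 0 < m) (x y : X) (i j : Fin 6) : 0 ≤ mk m x y i j := by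
  unfold mk; split <;> linarith

lemma mk_le (hm : 0 < m) (x y : X) (i j : Fin 6) : mk m x y i j ≤ m := by
  unfold mk; split <;> linarith

lemma mk_of_mark {x y : X} {i j : Fin 6} (h : Mark x y i j) : mk m x y i j = m := by
  unfold mk; rw [if_pos h]

lemma mk_of_not_mark {x y : X} {i j : Fin 6} (h : ¬ Mark x y i j) : mk m x y i j = 0 := by
  unfold mk; rw [if_neg h]

lemma gd_self (u : Pt X) : gd m c u u = 0 := by simp [gd]

lemma gd_eq {u v : Pt X} (h : u ≠ v) :
    gd m c u v = 2*m*((⌈dist u.1 v.1 / (2*m)⌉ : ℤ) : ℝ) + (2*c + m) +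
      mk m u.1 v.1 u.2.down v.2.down := by
  unfold gd; rw [dif_neg h]

lemma gd_comm (u v : Pt X) : gd m c u v = gd m c v u := by
  rcases eq_or_ne u v with rfl | h
  · rfl
  · rw [gd_eq h, gd_eq h.symm, dist_comm, mk_symm]

variable (hm : 0 < m) (hc : 0 < c)
include hm

lemma k_nonneg (x y : X) : (0:ℝ) ≤ ((⌈dist x y / (2*m)⌉ : ℤ) : ℝ) := by
  have : (0:ℤ) ≤ ⌈dist x y / (2*m)⌉ :=
    Int.ceil_nonneg (div_nonneg dist_nonneg (by linarith))
  exact_mod_cast this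

lemma k_subadd (x y z : X) :
    (⌈dist x z / (2*m)⌉ : ℤ) ≤ ⌈dist x y / (2*m)⌉ + ⌈dist y z / (2*m)⌉ := by
  have h1 : dist x z / (2*m) ≤ dist x y / (2*m) + dist y z / (2*m) := by
    rw [← add_div]
    exact (div_le_div_iff_of_pos_right (by linarith)).2 (dist_triangle x y z)
  calc (⌈dist x z / (2*m)⌉ : ℤ) ≤ ⌈dist x y / (2*m) + dist y z / (2*m)⌉ := Int.ceil_le_ceil h1
    _ ≤ _ := Int.ceil_add_le _ _

include hc in
lemma gd_lower {u v : Pt X} (h : u ≠ v) : m + 2*c ≤ gd m c u v := by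
  rw [gd_eq h]
  have h1 := k_nonneg hm (X := X) u.1 v.1
  have h2 := mk_nonneg hm u.1 v.1 u.2.down v.2.down
  nlinarith

include hc in
lemma gd_nonneg (u v : Pt X) : 0 ≤ gd m c u v := by
  rcases eq_or_ne u v with rfl | h
  · rw [gd_self]
  · linarith [gd_lower hm hc h]

include hc in
lemma gd_dist_bounds {u v : Pt X} (h : u ≠ v) :
    dist u.1 v.1 ≤ gd m c u v ∧ gd m c u v ≤ dist u.1 v.1 + (4*m + 2*c) := by
  rw [gd_eq h]
  have h2m : (0:ℝ) < 2*m := by linarith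
  have hle : dist u.1 v.1 / (2*m) ≤ ((⌈dist u.1 v.1 / (2*m)⌉ : ℤ) : ℝ) := Int.le_ceil _
  have hlt : ((⌈dist u.1 v.1 / (2*m)⌉ : ℤ) : ℝ) < dist u.1 v.1 / (2*m) + 1 :=
    Int.ceil_lt_add_one _
  have e1 : dist u.1 v.1 ≤ 2*m*((⌈dist u.1 v.1 / (2*m)⌉ : ℤ) : ℝ) := by
    have := (div_le_iff₀ h2m).1 hle
    linarith
  have e2 : 2*m*((⌈dist u.1 v.1 / (2*m)⌉ : ℤ) : ℝ) < dist u.1 v.1 + 2*m := by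
    have h' : ((⌈dist u.1 v.1 / (2*m)⌉ : ℤ) : ℝ) - 1 < dist u.1 v.1 / (2*m) := by linarith
    have := (lt_div_iff₀ h2m).1 h'
    linarith
  have h3 := mk_nonneg hm u.1 v.1 u.2.down v.2.down
  have h4 := mk_le hm u.1 v.1 u.2.down v.2.down
  constructor <;> linarith

include hc in
lemma gd_triangle (u v w : Pt X) : gd m c u w ≤ gd m c u v + gd m c v w := by
  rcases eq_or_ne u w with rfl | huw
  · rw [gd_self]; exact add_nonneg (gd_nonneg hm hc u v) (gd_nonneg hm hc v u)
  rcases eq_or_ne u v with rfl | huv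
  · rw [gd_self, zero_add]
  rcases eq_or_ne v w with rfl | hvw
  · rw [gd_self, add_zero]
  rw [gd_eq huw, gd_eq huv, gd_eq hvw]
  have hks := k_subadd hm (X := X) u.1 v.1 w.1
  have hks' : ((⌈dist u.1 w.1 / (2*m)⌉ : ℤ) : ℝ) ≤
      ((⌈dist u.1 v.1 / (2*m)⌉ : ℤ) : ℝ) + ((⌈dist v.1 w.1 / (2*m)⌉ : ℤ) : ℝ) := by
    exact_mod_cast hks
  have h1 := mk_le hm u.1 w.1 u.2.down w.2.down
  have h2 := mk_nonneg hm u.1 v.1 u.2.down v.2.down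
  have h3 := mk_nonneg hm v.1 w.1 v.2.down w.2.down
  nlinarith

include hc in
lemma gd_defect {u v w : Pt X} (huv : u ≠ v) (hvw : v ≠ w) (huw : u ≠ w) :
    2*c ≤ gd m c u v + gd m c v w - gd m c u w := by
  rw [gd_eq huw, gd_eq huv, gd_eq hvw]
  have hks := k_subadd hm (X := X) u.1 v.1 w.1
  have hks' : ((⌈dist u.1 w.1 / (2*m)⌉ : ℤ) : ℝ) ≤
      ((⌈dist u.1 v.1 / (2*m)⌉ : ℤ) : ℝ) + ((⌈dist v.1 w.1 / (2*m)⌉ : ℤ) : ℝ) := by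
    exact_mod_cast hks
  have h1 := mk_le hm u.1 w.1 u.2.down w.2.down
  have h2 := mk_nonneg hm u.1 v.1 u.2.down v.2.down
  have h3 := mk_nonneg hm v.1 w.1 v.2.down w.2.down
  nlinarith

end

noncomputable def genMS (m c : ℝ) (hm : 0 < m) (hc : 0 < c) : MetricSpace (Pt X) where
  dist := gd m c
  dist_self := gd_self
  dist_comm := gd_comm
  dist_triangle u v w := gd_triangle hm hc u v w
  eq_of_dist_eq_zero := by
    intro u v h0
    by_contra hne
    have h1 : m + 2*c ≤ gd m c u v := gd_lower hm hc hne
    have h0' : gd m c u v = 0 := h0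
    linarith


lemma genMS_dist {m c : ℝ} (hm : 0 < m) (hc : 0 < c) (u v : Pt X) :
    @dist _ (genMS (X := X) m c hm hc).toDist u v = gd m c u v := rfl

variable {m c : ℝ}

lemma mark_diag (x : X) (i j : Fin 6) : Mark x x i j ↔ A i j = true := by
  constructor
  · rintro (⟨_, hA⟩ | ⟨hne, _⟩)
    · exact hA
    · exact absurd rfl hne
  · exact fun hA => Or.inl ⟨rfl, hA⟩

lemma mark01 {x y : X} (hne : x ≠ y) : Mark x y 0 1 ↔ WellOrderingRel x y := by
  constructor
  · rintro (⟨heq, _⟩ | ⟨_, (⟨hr, _, _⟩ | ⟨hr, h0, h1⟩)⟩)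
    · exact absurd heq hne
    · exact hr
    · exact absurd h0 (by decide)
  · exact fun hr => Or.inr ⟨hne, Or.inl ⟨hr, rfl, rfl⟩⟩

section
variable (hm : 0 < m) (hc : 0 < c)
include hm hc

lemma key (f : Pt X ≃ Pt X)
    (h : ∀ u v : Pt X, |gd m c u v - gd m c (f u) (f v)| < m)
    {u v : Pt X} (huv : u ≠ v) :
    (⌈dist u.1 v.1 / (2*m)⌉ : ℤ) = ⌈dist (f u).1 (f v).1 / (2*m)⌉ ∧
    (Mark u.1 v.1 u.2.down v.2.down ↔ Mark (f u).1 (f v).1 (f u).2.down (f v).2.down) := by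
  have hfuv : f u ≠ f v := fun e => huv (f.injective e)
  have hd := h u v
  rw [gd_eq huv, gd_eq hfuv] at hd
  obtain ⟨hdl, hdr⟩ := abs_lt.1 hd
  set k1 : ℤ := ⌈dist u.1 v.1 / (2*m)⌉ with hk1
  set k2 : ℤ := ⌈dist (f u).1 (f v).1 / (2*m)⌉ with hk2
  have hb1 : 0 ≤ mk m u.1 v.1 u.2.down v.2.down := mk_nonneg hm _ _ _ _
  have hb1' : mk m u.1 v.1 u.2.down v.2.down ≤ m := mk_le hm _ _ _ _
  have hb2 : 0 ≤ mk m (f u).1 (f v).1 (f u).2.down (f v).2.down := mk_nonneg hm _ _ _ _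
  have hb2' : mk m (f u).1 (f v).1 (f u).2.down (f v).2.down ≤ m := mk_le hm _ _ _ _
  have hk : k1 = k2 := by
    rcases lt_trichotomy k1 k2 with hlt | heq | hgt
    · exfalso
      have h1 : ((k1 : ℝ) + 1 ≤ (k2 : ℝ)) := by exact_mod_cast hlt
      have hmul : 2*m*((k1:ℝ)+1) ≤ 2*m*(k2:ℝ) :=
        mul_le_mul_of_nonneg_left h1 (by linarith)
      nlinarith
    · exact heq
    · exfalso
      have h1 : ((k2 : ℝ) + 1 ≤ (k1 : ℝ)) := by exact_mod_cast hgt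
      have hmul : 2*m*((k2:ℝ)+1) ≤ 2*m*(k1:ℝ) :=
        mul_le_mul_of_nonneg_left h1 (by linarith)
      nlinarith
  refine ⟨hk, ?_⟩
  have hkr : ((k1:ℝ)) = ((k2:ℝ)) := by exact_mod_cast hk
  rw [hkr] at hdl hdr
  constructor
  · intro hM1
    by_contra hM2
    rw [mk_of_mark hM1, mk_of_not_mark hM2] at hdl hdr
    linarith
  · intro hM2
    by_contra hM1
    rw [mk_of_not_mark hM1, mk_of_mark hM2] at hdl hdr
    linarith

lemma rigid (f : Pt X ≃ Pt X)
    (h : ∀ u v : Pt X, |gd m c u v - gd m c (f u) (f v)| < m) :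
    ∀ p : Pt X, f p = p := by
  have h2m : (0:ℝ) < 2*m := by linarith
  -- clusters are preserved
  have stepBase : ∀ (x : X) (i j : ULift.{u} (Fin 6)), (f (x, i)).1 = (f (x, j)).1 := by
    intro x i j
    rcases eq_or_ne i j with rfl | hij
    · rfl
    have huv : ((x, i) : Pt X) ≠ (x, j) := fun hE => hij (congrArg Prod.snd hE)
    obtain ⟨hk, -⟩ := key hm hc f h huv
    have h0 : (⌈dist ((x, i) : Pt X).1 ((x, j) : Pt X).1 / (2*m)⌉ : ℤ) = 0 := by
      simp
    rw [h0] at hk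
    by_contra hne
    have hdpos : 0 < dist (f (x, i)).1 (f (x, j)).1 := dist_pos.2 hne
    have hcpos : (0:ℤ) < ⌈dist (f (x, i)).1 (f (x, j)).1 / (2*m)⌉ :=
      Int.ceil_pos.2 (div_pos hdpos h2m)
    omega
  have stepDiff : ∀ (x y : X) (i j : ULift.{u} (Fin 6)), x ≠ y →
      (f (x, i)).1 ≠ (f (y, j)).1 := by
    intro x y i j hxy hfeq
    have huv : ((x, i) : Pt X) ≠ (y, j) := fun hE => hxy (congrArg Prod.fst hE)
    obtain ⟨hk, -⟩ := key hm hc f h huv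
    have h1 : (0:ℤ) < ⌈dist ((x, i) : Pt X).1 ((y, j) : Pt X).1 / (2*m)⌉ :=
      Int.ceil_pos.2 (div_pos (dist_pos.2 hxy) h2m)
    have h2 : (⌈dist (f (x, i)).1 (f (y, j)).1 / (2*m)⌉ : ℤ) = 0 := by
      rw [hfeq, dist_self, zero_div, Int.ceil_zero]
    omega
  -- within each cluster, f is the identity on labels
  have hfix : ∀ (x : X) (i : ULift.{u} (Fin 6)), f (x, i) = ((f (x, ⟨0⟩)).1, i) := by
    intro x i
    set τ : Fin 6 → Fin 6 := fun i => (f (x, ⟨i⟩)).2.down with hτ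
    have hτinj : Function.Injective τ := by
      intro i j hij
      have hb := stepBase x ⟨i⟩ ⟨j⟩
      have hfe : f (x, (⟨i⟩ : ULift (Fin 6))) = f (x, ⟨j⟩) := by
        apply Prod.ext hb
        exact ULift.ext _ _ hij
      have := f.injective hfe
      have h2 := congrArg Prod.snd this
      exact congrArg ULift.down h2
    have hτA : ∀ i j, A (τ i) (τ j) = A i j := by
      intro i j
      rcases eq_or_ne i j with rfl | hij
      · rw [A_irrefl, A_irrefl]
      have huv : ((x, ⟨i⟩) : Pt X) ≠ (x, ⟨j⟩) := by
        intro hE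
        exact hij (congrArg (fun p => (Prod.snd p).down) hE)
      obtain ⟨-, hMiff⟩ := key hm hc f h huv
      have hb : (f (x, (⟨i⟩ : ULift (Fin 6)))).1 = (f (x, ⟨j⟩)).1 := stepBase x ⟨i⟩ ⟨j⟩
      rw [hb] at hMiff
      have hMi : Mark x x i j ↔ A i j = true := mark_diag x i j
      have hMf : Mark (f (x, (⟨j⟩ : ULift (Fin 6)))).1 (f (x, (⟨j⟩ : ULift (Fin 6)))).1
          (τ i) (τ j) ↔ A (τ i) (τ j) = true := mark_diag _ _ _
      have : A i j = true ↔ A (τ i) (τ j) = true := by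
        rw [← hMi, ← hMf]
        exact hMiff
      rcases Bool.eq_false_or_eq_true (A i j) with hA | hA <;>
        rcases Bool.eq_false_or_eq_true (A (τ i) (τ j)) with hA' | hA' <;>
        simp_all
    have hτid : ∀ i, τ i = i := A_rigid τ hτinj hτA
    have h1 : (f (x, i)).1 = (f (x, ⟨0⟩)).1 := stepBase x i ⟨0⟩
    have h2 : (f (x, i)).2 = i := by
      have : (f (x, i)).2.down = i.down := by
        have := hτid i.down
        simpa [hτ] using this
      exact ULift.ext _ _ this
    exact Prod.ext h1 h2
  set g : X → X := fun x => (f (x, ⟨0⟩)).1 with hg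
  have hfixg : ∀ (x : X) (i : ULift.{u} (Fin 6)), f (x, i) = (g x, i) := hfix
  have hginj : Function.Injective g := by
    intro x y hxy
    by_contra hne
    exact stepDiff x y ⟨0⟩ ⟨0⟩ hne hxy
  have hgsurj : Function.Surjective g := by
    intro y
    refine ⟨(f.symm (y, ⟨0⟩)).1, ?_⟩
    have hp : f (f.symm (y, ⟨0⟩)) = (y, ⟨0⟩) := f.apply_symm_apply _
    have hp2 : f ((f.symm (y, ⟨0⟩)).1, (f.symm (y, ⟨0⟩)).2) =
        (g (f.symm (y, ⟨0⟩)).1, (f.symm (y, ⟨0⟩)).2) := hfixg _ _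
    have : (g (f.symm (y, ⟨0⟩)).1, (f.symm (y, ⟨0⟩)).2) = ((y : X), (⟨0⟩ : ULift (Fin 6))) := by
      rw [← hp2]
      exact hp
    exact congrArg Prod.fst this
  have horder : ∀ x y : X, x ≠ y → (WellOrderingRel x y ↔ WellOrderingRel (g x) (g y)) := by
    intro x y hne
    have huv : ((x, (⟨0⟩ : ULift (Fin 6))) : Pt X) ≠ (y, ⟨1⟩) :=
      fun hE => hne (congrArg Prod.fst hE)
    obtain ⟨-, hMiff⟩ := key hm hc f h huv
    rw [hfixg x ⟨0⟩, hfixg y ⟨1⟩] at hMiff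
    have hgne : g x ≠ g y := fun hE => hne (hginj hE)
    rw [show (((x, (⟨0⟩ : ULift (Fin 6))) : Pt X)).2.down = (0 : Fin 6) from rfl,
        show (((y, (⟨1⟩ : ULift (Fin 6))) : Pt X)).2.down = (1 : Fin 6) from rfl] at hMiff
    rw [mark01 hne, mark01 hgne] at hMiff
    exact hMiff
  have hgid : ∀ x : X, g x = x := by
    by_contra hcon
    push_neg at hcon
    set S : Set X := {x | g x ≠ x} with hS
    have hSne : S.Nonempty := hcon
    have wf : WellFounded (WellOrderingRel : X → X → Prop) := IsWellFounded.wf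
    set x₀ := wf.min S hSne with hx₀def
    have hmem : g x₀ ≠ x₀ := wf.min_mem S hSne
    have hmin : ∀ y, WellOrderingRel y x₀ → g y = y := by
      intro y hy
      by_contra hgy
      exact wf.not_lt_min S hgy hy
    rcases trichotomous (r := WellOrderingRel) (a := g x₀) (b := x₀) with hr | heq | hr
    · exact hmem (hginj (hmin _ hr))
    · exact hmem heq
    · obtain ⟨z, hz⟩ := hgsurj x₀
      have hzx : z ≠ x₀ := fun e => hmem (e ▸ hz)
      rcases trichotomous (r := WellOrderingRel) (a := z) (b := x₀) with h1 | heq | h3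
      · exact hzx ((hmin z h1).symm.trans hz)
      · exact hzx heq
      · have h4 : WellOrderingRel (g x₀) (g z) := (horder x₀ z (fun e => hzx e.symm)).1 h3
        rw [hz] at h4
        exact (irrefl x₀ : ¬ WellOrderingRel x₀ x₀) (_root_.trans hr h4)
  intro p
  exact (hfixg p.1 p.2).trans (by rw [hgid]; rfl)

lemma bij_bound (f : Pt X ≃ Pt X) (hf : f ≠ Equiv.refl (Pt X)) :
    ∃ u v : Pt X, m ≤ |gd m c u v - gd m c (f u) (f v)| := by
  by_contra hcon
  push_neg at hcon
  exact hf (Equiv.ext (rigid hm hc f hcon))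

end

end GenericDense


/-- Generic metric spaces are dense in the Gromov–Hausdorff class: for every metric
space `X`, every `η > 0`, and all `δ, c > 0` with `δ + c ≤ η`, there is a generic
metric space `U` with `d_GH(X, U) ≤ η` (stated as `2 d_GH ≤ 2η`), and moreover
`s(U) ≥ δ/3 + 2c`, `t(U) ≥ 2c`, `e(U) ≥ δ/3`; in particular `s`, `t`, `e` are positive. -/
theorem generic_spaces_dense (X : Type u) [MetricSpace X] (η δ c : ℝ)
    (hη : 0 < η) (hδ : 0 < δ) (hc : 0 < c) (hδc : δ + c ≤ η) :
    ∃ (U : Type u) (_ : MetricSpace U),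
      twoGhDist X U ≤ ENNReal.ofReal (2 * η) ∧
      ENNReal.ofReal (δ / 3 + 2 * c) ≤ sepInf U ∧
      ENNReal.ofReal (2 * c) ≤ defectInf U ∧
      ENNReal.ofReal (δ / 3) ≤ bijDistortionInf U ∧
      0 < sepInf U ∧ 0 < defectInf U ∧ 0 < bijDistortionInf U := by
  classical
  set m : ℝ := δ / 3 with hmdef
  have hm : 0 < m := by rw [hmdef]; linarith
  letI I : MetricSpace (GenericDense.Pt X) := GenericDense.genMS m c hm hc
  have hdist : ∀ u v : GenericDense.Pt X, dist u v = GenericDense.gd m c u v :=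
    GenericDense.genMS_dist hm hc
  have hGH : twoGhDist X (GenericDense.Pt X) ≤ ENNReal.ofReal (2 * η) := by
    set R : Set (X × GenericDense.Pt X) := {p | p.2.1 = p.1} with hRdef
    have hcorr : IsCorrespondence R :=
      ⟨fun x => ⟨(x, ⟨0⟩), rfl⟩, fun u => ⟨u.1, rfl⟩⟩
    refine le_trans (iInf_le_of_le R (iInf_le_of_le hcorr le_rfl)) ?_
    refine iSup₂_le fun p hp => iSup₂_le fun q hq => ?_
    refine ENNReal.ofReal_le_ofReal ?_
    have hp' : p.2.1 = p.1 := hp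
    have hq' : q.2.1 = q.1 := hq
    rw [← hp', ← hq', hdist]
    rcases eq_or_ne p.2 q.2 with he | hne
    · rw [he, dist_self, GenericDense.gd_self]
      simp only [sub_zero, abs_zero]
      linarith
    · obtain ⟨hb1, hb2⟩ := GenericDense.gd_dist_bounds hm hc hne
      rw [abs_le]
      constructor <;> [linarith; linarith]
  have hsep : ENNReal.ofReal (δ / 3 + 2 * c) ≤ sepInf (GenericDense.Pt X) := by
    refine le_sInf fun r hr => ?_
    obtain ⟨u, v, huv, rfl⟩ := hr
    rw [edist_dist]
    refine ENNReal.ofReal_le_ofReal ?_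
    have := GenericDense.gd_lower hm hc huv
    rw [hdist]
    linarith
  have hdef : ENNReal.ofReal (2 * c) ≤ defectInf (GenericDense.Pt X) := by
    refine le_sInf fun r hr => ?_
    obtain ⟨x, y, z, hxy, hyz, hxz, rfl⟩ := hr
    refine ENNReal.ofReal_le_ofReal ?_
    have := GenericDense.gd_defect hm hc hxy hyz hxz
    rw [hdist, hdist, hdist]
    linarith
  have hbij : ENNReal.ofReal (δ / 3) ≤ bijDistortionInf (GenericDense.Pt X) := by
    refine le_sInf fun r hr => ?_
    obtain ⟨f, hf, rfl⟩ := hr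
    obtain ⟨u, v, hb⟩ := GenericDense.bij_bound hm hc f hf
    calc ENNReal.ofReal (δ / 3)
        ≤ ENNReal.ofReal |dist u v - dist (f u) (f v)| := by
          refine ENNReal.ofReal_le_ofReal ?_
          rw [hdist, hdist]
          exact hb
      _ ≤ ⨆ (a : GenericDense.Pt X) (a' : GenericDense.Pt X),
            ENNReal.ofReal |dist a a' - dist (f a) (f a')| :=
          le_iSup_of_le u (le_iSup_of_le v le_rfl)
  refine ⟨GenericDense.Pt X, I, hGH, hsep, hdef, hbij, ?_, ?_, ?_⟩
  · exact lt_of_lt_of_le (ENNReal.ofReal_pos.2 (by linarith)) hsep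
  · exact lt_of_lt_of_le (ENNReal.ofReal_pos.2 (by linarith)) hdef
  · exact lt_of_lt_of_le (ENNReal.ofReal_pos.2 (by linarith)) hbij
end
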